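/- Let F be a linear ordered field equipped with its order topology such that F is Cauchy complete and has cofinality ω₀, and let X be a completely F-regular space. If V is a Gδ subset of X and S is a compact subset of X with S ⊆ V, then there exists f ∈ C(X,F) such that S ⊆ Z(f) ⊆ V. -/

import Mathlib

open Set

/-- `Pz a` : the intersection of all minimal prime ideals of `R` which contain `a`. -/
def Pz {R : Type*} [CommRing R] (a : R) : Set R :=
  ⋂ P ∈ {P : Ideal R | P ∈ minimalPrimes R ∧ a ∈ P}, (P : Set R)

/-- A proper ideal `I` is a `z°`-ideal if `Pz a ⊆ I` for every `a ∈ I`. -/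
def IsZoIdeal {R : Type*} [CommRing R] (I : Ideal R) : Prop :=
  I ≠ ⊤ ∧ ∀ a ∈ I, Pz a ⊆ (I : Set R)

/-- The zero set `Z(f)` of a continuous function `f`. -/
def ZSet {X F : Type*} [TopologicalSpace X] [TopologicalSpace F] [Zero F]
    (f : C(X, F)) : Set X := {x | f x = 0}

/-- `f` is bounded over `X` (i.e. `f ∈ B(X,F)`). -/
def BddF {X F : Type*} [TopologicalSpace X] [Field F] [LinearOrder F] [IsStrictOrderedRing F] [TopologicalSpace F]
    (f : C(X, F)) : Prop := ∃ l : F, 0 < l ∧ ∀ x, |f x| ≤ l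

/-- `X` is completely `F`-regular: Hausdorff, and points can be separated from closed
sets by bounded `F`-valued continuous functions. -/
def CompletelyFRegular (X F : Type*) [TopologicalSpace X] [Field F] [LinearOrder F] [IsStrictOrderedRing F]
    [TopologicalSpace F] : Prop :=
  T2Space X ∧ ∀ K : Set X, IsClosed K → ∀ x ∉ K, ∃ f : C(X, F),
    BddF f ∧ f x = 0 ∧ ∀ k ∈ K, f k = 1

/-- `A` is an intermediate ring: a subring of `C(X,F)` containing all of `B(X,F)`. -/
def IsIntermediate {X F : Type*} [TopologicalSpace X] [Field F] [LinearOrder F] [IsStrictOrderedRing F]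
    [TopologicalSpace F] [OrderTopology F] (A : Subring C(X, F)) : Prop :=
  ∀ f : C(X, F), BddF f → f ∈ A

/-- An ideal of closed sets in `X`: a nonempty family of closed sets, closed under
finite unions and under passing to closed subsets. -/
def IsIdealOfClosedSets {X : Type*} [TopologicalSpace X] (P : Set (Set X)) : Prop :=
  P.Nonempty ∧ (∀ A ∈ P, IsClosed A) ∧ (∀ A ∈ P, ∀ B ∈ P, A ∪ B ∈ P) ∧
    ∀ C : Set X, IsClosed C → ∀ A ∈ P, C ⊆ A → C ∈ P

/-- `X` is an almost `P_F`-space: every nonempty zero set has nonempty interior. -/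
def AlmostPF (X F : Type*) [TopologicalSpace X] [Field F] [LinearOrder F] [IsStrictOrderedRing F]
    [TopologicalSpace F] : Prop :=
  ∀ f : C(X, F), (ZSet f).Nonempty → (interior (ZSet f)).Nonempty


/-- F is Cauchy complete: every Cauchy sequence in F converges in the order topology. -/
def CauchyCompleteField (F : Type*) [Field F] [LinearOrder F] [IsStrictOrderedRing F] [TopologicalSpace F] : Prop :=
  ∀ a : ℕ → F, (∀ ε : F, 0 < ε → ∃ N : ℕ, ∀ m ≥ N, ∀ n ≥ N, |a m - a n| < ε) →
    ∃ l : F, Filter.Tendsto a Filter.atTop (nhds l)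

/-- F has cofinality ω₀: a countable sequence is cofinal in F. -/
def CofinalityOmega (F : Type*) [Preorder F] : Prop :=
  ∃ s : ℕ → F, ∀ x : F, ∃ n : ℕ, x ≤ s n

/-- separation lemma: compact set inside open set -/
lemma aux_sep {X F : Type*} [TopologicalSpace X] [Field F] [LinearOrder F] [IsStrictOrderedRing F]
    [TopologicalSpace F] [OrderTopology F]
    (hX : CompletelyFRegular X F) (S : Set X) (hS : IsCompact S)
    (U : Set X) (hU : IsOpen U) (hSU : S ⊆ U) :
    ∃ g : C(X, F), (∀ y, 0 ≤ g y) ∧ (∀ y, g y ≤ 1) ∧ (∀ y ∈ S, g y = 0) ∧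
      ∀ y ∉ U, g y = 1 := by
  have hmem : ∀ x : S, (x : X) ∉ Uᶜ := fun x hx => hx (hSU x.2)
  choose g hgb hg0 hg1 using fun x : S => hX.2 Uᶜ hU.isClosed_compl x (hmem x)
  have habs : ∀ x : S, Continuous fun y => |g x y| := fun x =>
    (g x).continuous.max (g x).continuous.neg
  have hφc : ∀ x : S, Continuous fun y => max (2 * min |g x y| 1 - 1) 0 := fun x =>
    (((continuous_const.mul ((habs x).min continuous_const)).sub
      continuous_const).max continuous_const)
  set φ : S → X → F := fun x y => max (2 * min |g x y| 1 - 1) 0 with hφ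
  set W : S → Set X := fun x => {y | |g x y| < 1/2} with hW
  have hWopen : ∀ x : S, IsOpen (W x) := fun x =>
    isOpen_lt (habs x) continuous_const
  have hcover : S ⊆ ⋃ x : S, W x := by
    intro y hy
    refine mem_iUnion.2 ⟨⟨y, hy⟩, ?_⟩
    simp only [hW, mem_setOf_eq, hg0 ⟨y, hy⟩, abs_zero]
    norm_num
  obtain ⟨t, ht⟩ := hS.elim_finite_subcover W hWopen hcover
  refine ⟨⟨fun y => ∏ i ∈ t, φ i y,
    continuous_finset_prod _ fun i _ => hφc i⟩, ?_, ?_, ?_, ?_⟩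
  · intro y
    exact Finset.prod_nonneg fun i _ => le_max_right _ _
  · intro y
    refine Finset.prod_le_one (fun i _ => le_max_right _ _) (fun i _ => ?_)
    refine max_le ?_ zero_le_one
    have h1 : min |g i y| 1 ≤ 1 := min_le_right _ _
    nlinarith
  · intro y hy
    obtain ⟨i, hit, hyW⟩ := mem_iUnion₂.1 (ht hy)
    refine Finset.prod_eq_zero hit ?_
    have h2 : min |g i y| 1 < 1/2 := lt_of_le_of_lt (min_le_left _ _) hyW
    have : 2 * min |g i y| 1 - 1 < 0 := by linarith
    exact max_eq_right this.le
  · intro y hy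
    refine Finset.prod_eq_one fun i _ => ?_
    have h3 : g i y = 1 := hg1 i y hy
    simp only [hφ, h3, abs_one, min_self]
    norm_num


/-- For Cauchy complete F of cofinality ω₀ and completely F-regular X: a compact set
contained in a Gδ set can be separated by a zero set. -/
theorem stmt12 {X F : Type*} [TopologicalSpace X] [Field F] [LinearOrder F] [IsStrictOrderedRing F]
    [TopologicalSpace F] [OrderTopology F]
    (hcc : CauchyCompleteField F) (hcf : CofinalityOmega F)
    (hX : CompletelyFRegular X F)
    (V : Set X) (hV : IsGδ V) (S : Set X) (hS : IsCompact S) (hSV : S ⊆ V) :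
    ∃ f : C(X, F), S ⊆ ZSet f ∧ ZSet f ⊆ V := by
  obtain ⟨U, hUopen, hVU⟩ := hV.eq_iInter_nat
  have hSU : ∀ n, S ⊆ U n := fun n =>
    hSV.trans (by rw [hVU]; exact iInter_subset U n)
  choose f hf0 hf1 hfS hfU using fun n => aux_sep hX S hS (U n) (hUopen n) (hSU n)
  -- cofinal increasing sequence
  obtain ⟨s, hs⟩ := hcf
  set t : ℕ → F := fun n => Nat.rec (max (s 0) 1) (fun n tn => max (s (n + 1)) (tn + 1)) n
    with htdef
  have ht1 : ∀ n, 1 ≤ t n := by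
    intro n
    induction n with
    | zero => exact le_max_right _ _
    | succ n ih => exact le_trans (by linarith) (le_max_right _ _)
  have htpos : ∀ n, 0 < t n := fun n => lt_of_lt_of_le one_pos (ht1 n)
  have htlt : ∀ n, t n < t (n + 1) := fun n =>
    lt_of_lt_of_le (lt_add_one _) (le_max_right _ _)
  have htmono : StrictMono t := strictMono_nat_of_lt_succ htlt
  have hts : ∀ n, s n ≤ t n := fun n => by
    cases n with
    | zero => exact le_max_left _ _
    | succ n => exact le_max_left _ _
  set e : ℕ → F := fun n => (t n)⁻¹ with hedef
  have hepos : ∀ n, 0 < e n := fun n => inv_pos.2 (htpos n)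
  have he_anti : ∀ {n m : ℕ}, n ≤ m → e m ≤ e n := fun {n m} h =>
    inv_anti₀ (htpos n) (htmono.le_iff_le.2 h)
  have he_small : ∀ ε : F, 0 < ε → ∃ N, e N < ε := by
    intro ε hε
    obtain ⟨n, hn⟩ := hs ε⁻¹
    refine ⟨n + 1, ?_⟩
    have h1 : ε⁻¹ < t (n + 1) := lt_of_le_of_lt (hn.trans (hts n)) (htlt n)
    have := inv_strictAnti₀ (inv_pos.2 hε) h1
    rwa [inv_inv] at this
  set c : ℕ → F := fun n => e n - e (n + 1) with hcdef
  have hcpos : ∀ n, 0 < c n := fun n => sub_pos.2 (htmono.lt_iff_lt.2 (lt_add_one n) |> fun h =>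
    inv_strictAnti₀ (htpos n) h)
  have hrange : ∀ N, ∑ n ∈ Finset.range N, c n = e 0 - e N := fun N =>
    Finset.sum_range_sub' e N
  have hIco : ∀ N M : ℕ, N ≤ M → ∑ n ∈ Finset.Ico N M, c n = e N - e M := by
    intro N M h
    rw [Finset.sum_Ico_eq_sub _ h, hrange, hrange]
    ring
  -- partial sums
  set A : ℕ → X → F := fun N x => ∑ n ∈ Finset.range N, c n * f n x with hAdef
  have hAC : ∀ N, Continuous (A N) := fun N =>
    continuous_finset_sum _ fun n _ => continuous_const.mul (f n).continuous
  have hAdiff : ∀ x, ∀ N M : ℕ, N ≤ M →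
      0 ≤ A M x - A N x ∧ A M x - A N x ≤ e N - e M := by
    intro x N M h
    have heq : A M x - A N x = ∑ n ∈ Finset.Ico N M, c n * f n x := by
      rw [hAdef]
      rw [Finset.sum_Ico_eq_sub _ h]
    constructor
    · rw [heq]
      exact Finset.sum_nonneg fun n _ => mul_nonneg (hcpos n).le (hf0 n x)
    · rw [heq, ← hIco N M h]
      exact Finset.sum_le_sum fun n _ => by
        have := hf1 n x
        nlinarith [hcpos n, hf0 n x]
  have hcauchy : ∀ x : X, ∃ l : F, Filter.Tendsto (fun N => A N x) Filter.atTop (nhds l) := by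
    intro x
    refine hcc _ ?_
    intro ε hε
    obtain ⟨N, hN⟩ := he_small ε hε
    refine ⟨N, fun m hm n hn => ?_⟩
    rcases le_total n m with h | h
    · have h1 := hAdiff x n m h
      rw [abs_of_nonneg h1.1]
      calc A m x - A n x ≤ e n - e m := h1.2
        _ ≤ e n := by linarith [hepos m]
        _ ≤ e N := he_anti hn
        _ < ε := hN
    · have h1 := hAdiff x m n h
      rw [abs_sub_comm, abs_of_nonneg h1.1]
      calc A n x - A m x ≤ e m - e n := h1.2
        _ ≤ e m := by linarith [hepos n]
        _ ≤ e N := he_anti hm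
        _ < ε := hN
  choose L hL using hcauchy
  have hLA : ∀ x N, |L x - A N x| ≤ e N := by
    intro x N
    have h1 : Filter.Tendsto (fun M => |A M x - A N x|) Filter.atTop
        (nhds |L x - A N x|) := ((hL x).sub_const _).abs
    refine le_of_tendsto h1 ?_
    filter_upwards [Filter.eventually_ge_atTop N] with M hM
    have h2 := hAdiff x N M hM
    rw [abs_of_nonneg h2.1]
    linarith [hepos M, h2.2]
  have hLge : ∀ x n, c n * f n x ≤ L x := by
    intro x n
    refine ge_of_tendsto (hL x) ?_
    filter_upwards [Filter.eventually_ge_atTop (n + 1)] with M hM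
    refine Finset.single_le_sum (f := fun k => c k * f k x)
      (fun k _ => mul_nonneg (hcpos k).le (hf0 k x)) ?_
    exact Finset.mem_range.2 hM
  have hL0 : ∀ x ∈ S, L x = 0 := by
    intro x hx
    have h1 : ∀ N, A N x = 0 := by
      intro N
      refine Finset.sum_eq_zero fun n _ => by rw [hfS n x hx, mul_zero]
    have h2 : Filter.Tendsto (fun N => A N x) Filter.atTop (nhds 0) := by
      simp only [h1]
      exact tendsto_const_nhds
    exact tendsto_nhds_unique (hL x) h2
  have hLcont : Continuous L := by
    rw [continuous_iff_continuousAt]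
    intro x
    rw [ContinuousAt, (nhds_basis_abs_sub_lt (L x)).tendsto_right_iff]
    intro ε hε
    obtain ⟨N, hN⟩ := he_small (ε / 3) (by positivity)
    have hopen : IsOpen {y | |A N y - A N x| < ε / 3} :=
      isOpen_lt ((hAC N).sub continuous_const).abs continuous_const
    have hx : x ∈ {y | |A N y - A N x| < ε / 3} := by
      simp only [mem_setOf_eq, sub_self, abs_zero]
      positivity
    filter_upwards [hopen.mem_nhds hx] with y hy
    have h1 : |L y - A N y| ≤ e N := hLA y N
    have h2 : |A N x - L x| ≤ e N := by rw [abs_sub_comm]; exact hLA x N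
    have h3 : |L y - L x| ≤ |L y - A N y| + |A N y - A N x| + |A N x - L x| := by
      calc |L y - L x| = |(L y - A N y) + (A N y - A N x) + (A N x - L x)| := by ring_nf
        _ ≤ |(L y - A N y) + (A N y - A N x)| + |A N x - L x| := abs_add_le _ _
        _ ≤ |L y - A N y| + |A N y - A N x| + |A N x - L x| := by
            linarith [abs_add_le (L y - A N y) (A N y - A N x)]

    calc |L y - L x| ≤ |L y - A N y| + |A N y - A N x| + |A N x - L x| := h3
      _ < ε / 3 + ε / 3 + ε / 3 := by linarith
      _ = ε := by ring
  refine ⟨⟨L, hLcont⟩, ?_, ?_⟩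
  · intro x hx
    show L x = 0
    exact hL0 x hx
  · intro x hx
    have hx0 : L x = 0 := hx
    rw [hVU]
    refine mem_iInter.2 fun n => ?_
    by_contra hxu
    have h1 : f n x = 1 := hfU n x hxu
    have h2 := hLge x n
    rw [h1, mul_one, hx0] at h2
    exact absurd h2 (not_le.2 (hcpos n))
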